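/- Let U be a Hermitian unitary n×n matrix and α ∈ ℂ \ (ℝ ∪ iℝ). The matrix φ = 2αI + (ᾱ - α)(P + UPU*) is invertible for every Hermitian projector P. -/

import Mathlib

open Matrix

lemma star_dot_conjTranspose_mul {n : ℕ} (A : Matrix (Fin n) (Fin n) ℂ)
    (v : Fin n → ℂ) :
    star v ⬝ᵥ (Aᴴ * A).mulVec v = star (A.mulVec v) ⬝ᵥ (A.mulVec v) := by
  rw [star_mulVec, Matrix.dotProduct_mulVec, Matrix.dotProduct_mulVec,
    Matrix.vecMul_vecMul]

lemma im_star_dot_self {n : ℕ} (w : Fin n → ℂ) :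
    (star w ⬝ᵥ w).im = 0 := by
  simp only [dotProduct, Pi.star_apply, Complex.star_def, Complex.conj_mul',
    ← Complex.ofReal_pow]
  simp [← Complex.ofReal_pow]

lemma eq_zero_of_star_dot_self {n : ℕ} (v : Fin n → ℂ)
    (h : star v ⬝ᵥ v = 0) : v = 0 := by
  have hre' : ∑ j, ‖v j‖ ^ 2 = 0 := by
    have h2 := congrArg Complex.re h
    simp only [dotProduct, Pi.star_apply, Complex.star_def, Complex.conj_mul',
      ← Complex.ofReal_pow, Complex.re_sum, Complex.ofReal_re, Complex.zero_re] at h2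
    exact h2
  funext i
  have hi := (Finset.sum_eq_zero_iff_of_nonneg
    (fun j _ => sq_nonneg ‖v j‖)).mp hre' i (Finset.mem_univ i)
  have : ‖v i‖ = 0 := by
    have := pow_eq_zero_iff (n := 2) (by norm_num) |>.mp hi
    exact this
  simpa using norm_eq_zero.mp this

/-- For `U` Hermitian unitary and `α` neither real nor purely imaginary, the matrix
`φ = 2αI + (ᾱ-α)(P + UPU*)` is invertible for every Hermitian projector `P`. -/
theorem phi_isUnit {n : ℕ} (U : Matrix (Fin n) (Fin n) ℂ)
    (hUnit : Uᴴ * U = 1) (hHerm : Uᴴ = U)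
    (α : ℂ) (hre : α.re ≠ 0) (him : α.im ≠ 0)
    (P : Matrix (Fin n) (Fin n) ℂ) (hP : Pᴴ = P) (hP2 : P * P = P) :
    IsUnit ((2 * α) • (1 : Matrix (Fin n) (Fin n) ℂ)
      + (star α - α) • (P + U * P * Uᴴ)) := by
  rw [Matrix.isUnit_iff_isUnit_det, isUnit_iff_ne_zero]
  intro hdet
  obtain ⟨v, hv, hmv⟩ := (Matrix.exists_mulVec_eq_zero_iff).mpr hdet
  set s := star v ⬝ᵥ v with hs
  have hp : star v ⬝ᵥ P.mulVec v = star (P.mulVec v) ⬝ᵥ (P.mulVec v) := by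
    have := star_dot_conjTranspose_mul P v
    rwa [hP, hP2] at this
  have hq : star v ⬝ᵥ (U * P * Uᴴ).mulVec v
      = star ((P * Uᴴ).mulVec v) ⬝ᵥ ((P * Uᴴ).mulVec v) := by
    have := star_dot_conjTranspose_mul (P * Uᴴ) v
    rw [Matrix.conjTranspose_mul, Matrix.conjTranspose_conjTranspose, hP] at this
    rwa [show U * P * (P * Uᴴ) = U * P * Uᴴ by
      rw [Matrix.mul_assoc, ← Matrix.mul_assoc P P Uᴴ, hP2, ← Matrix.mul_assoc]] at this
  have hps : (star v ⬝ᵥ P.mulVec v).im = 0 := by rw [hp]; exact im_star_dot_self _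
  have hqs : (star v ⬝ᵥ (U * P * Uᴴ).mulVec v).im = 0 := by
    rw [hq]; exact im_star_dot_self _
  have hsim : s.im = 0 := im_star_dot_self v
  have h0 : star v ⬝ᵥ (((2 * α) • (1 : Matrix (Fin n) (Fin n) ℂ)
      + (star α - α) • (P + U * P * Uᴴ)).mulVec v) = 0 := by
    rw [hmv, dotProduct_zero]
  rw [Matrix.add_mulVec, Matrix.smul_mulVec, Matrix.smul_mulVec,
    Matrix.one_mulVec, Matrix.add_mulVec, dotProduct_add, dotProduct_smul,
    dotProduct_smul, dotProduct_add] at h0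
  set p := star v ⬝ᵥ P.mulVec v with hpdef
  set q := star v ⬝ᵥ (U * P * Uᴴ).mulVec v with hqdef
  have hre0 : (2 * α * s + (star α - α) * (p + q)).re = 0 := by
    have h0' : 2 * α * s + (star α - α) * (p + q) = 0 := by
      simpa [smul_eq_mul, hs] using h0
    rw [h0']; rfl
  have hkey : 2 * α.re * s.re = 0 := by
    have h := hre0
    simp only [Complex.add_re, Complex.mul_re, Complex.sub_re, Complex.sub_im,
      Complex.add_im, Complex.add_re, hsim, hps, hqs, Complex.conj_re,
      Complex.conj_im, Complex.mul_im, Complex.re_ofNat, Complex.im_ofNat,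
      Complex.star_def] at h
    nlinarith [h]
  have hsre : s.re = 0 := by
    have h2 : (2 : ℝ) * α.re ≠ 0 := mul_ne_zero two_ne_zero hre
    rcases mul_eq_zero.mp hkey with h | h
    · exact absurd h h2
    · exact h
  exact hv (eq_zero_of_star_dot_self v (Complex.ext hsre hsim))
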